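/- There exists a unique γ̄ > 0 such that ∫_0^8 exp(−γ/(2γ̄)) / √(2π·γ̄·γ) dγ = 1/2. Moreover, the function γ̄ ↦ ∫_0^8 exp(−γ/(2γ̄))/√(2πγ̄γ) dγ is strictly decreasing on (0, ∞). -/

import Mathlib

open Real MeasureTheory Set

noncomputable def Hprim (c : ℝ) : ℝ := ∫ s in (0:ℝ)..c, Real.exp (-s^2)

lemma image_sq (g : ℝ) (hg : 0 < g) :
    (fun x : ℝ => 2 * g * x ^ 2) '' Ioo 0 (2 / Real.sqrt g) = Ioo 0 8 := by
  have hsg : 0 < Real.sqrt g := Real.sqrt_pos.2 hg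
  ext y
  simp only [mem_image, mem_Ioo]
  constructor
  · rintro ⟨x, ⟨hx0, hxb⟩, rfl⟩
    constructor
    · positivity
    · have h1 : x ^ 2 < (2 / Real.sqrt g) ^ 2 :=
        pow_lt_pow_left₀ hxb hx0.le (by norm_num)
      have h2 : (2 / Real.sqrt g) ^ 2 = 4 / g := by
        rw [div_pow, Real.sq_sqrt hg.le]; norm_num
      have := (mul_lt_mul_iff_right₀ (by positivity : (0:ℝ) < 2 * g)).2 h1
      rw [h2] at this
      calc 2 * g * x ^ 2 < 2 * g * (4 / g) := this
        _ = 8 := by field_simp; ring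
  · rintro ⟨hy0, hy8⟩
    refine ⟨Real.sqrt (y / (2 * g)), ⟨Real.sqrt_pos.2 (by positivity), ?_⟩, ?_⟩
    · rw [show (2:ℝ) / Real.sqrt g = Real.sqrt (4 / g) by
        rw [Real.sqrt_div (by norm_num) g, show Real.sqrt 4 = 2 by
          rw [show (4:ℝ) = 2^2 by norm_num, Real.sqrt_sq (by norm_num)]]]
      apply Real.sqrt_lt_sqrt (by positivity)
      rw [div_lt_div_iff₀ (by positivity) hg]
      nlinarith
    · rw [Real.sq_sqrt (by positivity : (0:ℝ) ≤ y / (2*g))]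
      field_simp

lemma key (g : ℝ) (hg : 0 < g) :
    (∫ γ in (0:ℝ)..8, Real.exp (-γ / (2 * g)) / Real.sqrt (2 * Real.pi * g * γ))
      = (2 / Real.sqrt Real.pi) * Hprim (2 / Real.sqrt g) := by
  have hsg : 0 < Real.sqrt g := Real.sqrt_pos.2 hg
  have hb : 0 < 2 / Real.sqrt g := by positivity
  have hsπ : 0 < Real.sqrt Real.pi := Real.sqrt_pos.2 Real.pi_pos
  rw [intervalIntegral.integral_of_le (by norm_num : (0:ℝ) ≤ 8),
    MeasureTheory.integral_Ioc_eq_integral_Ioo, ← image_sq g hg,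
    integral_image_eq_integral_abs_deriv_smul measurableSet_Ioo
      (f' := fun x => 4 * g * x)
      (fun x _ => by
        have : HasDerivAt (fun x : ℝ => 2 * g * x ^ 2) (4 * g * x) x := by
          have h := (hasDerivAt_pow 2 x).const_mul (2 * g)
          norm_num at h
          exact h.congr_deriv (by ring)
        exact this.hasDerivWithinAt)
      (fun a ha b hb h => by
        have h2 : a ^ 2 = b ^ 2 := by
          have h2g : (2:ℝ) * g ≠ 0 := by positivity
          field_simp at h; exact h
        calc a = Real.sqrt (a ^ 2) := (Real.sqrt_sq ha.1.le).symm
          _ = Real.sqrt (b ^ 2) := by rw [h2]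
          _ = b := Real.sqrt_sq hb.1.le)]
  rw [MeasureTheory.setIntegral_congr_fun measurableSet_Ioo
    (g := fun x => (2 / Real.sqrt Real.pi) * Real.exp (-x ^ 2))
    (fun x hx => by
      have hx0 : 0 < x := hx.1
      have harg : -(2 * g * x ^ 2) / (2 * g) = -x ^ 2 := by
        field_simp
      have hsq : Real.sqrt (2 * Real.pi * g * (2 * g * x ^ 2))
          = 2 * g * x * Real.sqrt Real.pi := by
        rw [show 2 * Real.pi * g * (2 * g * x ^ 2) = (2 * g * x) ^ 2 * Real.pi by ring,
          Real.sqrt_mul (sq_nonneg _), Real.sqrt_sq (by positivity : (0:ℝ) ≤ 2 * g * x)]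
      simp only [smul_eq_mul, harg, hsq, abs_of_pos (by positivity : (0:ℝ) < 4 * g * x)]
      field_simp
      ring)]
  rw [MeasureTheory.integral_const_mul, Hprim,
    intervalIntegral.integral_of_le hb.le, MeasureTheory.integral_Ioc_eq_integral_Ioo]

lemma Hprim_strictMono : StrictMono Hprim := by
  intro a b hab
  have hint : ∀ u v : ℝ, IntervalIntegrable (fun s => Real.exp (-s^2)) volume u v :=
    fun u v => (Continuous.intervalIntegrable (by continuity) u v)
  have hsplit : Hprim b - Hprim a = ∫ s in a..b, Real.exp (-s^2) := by
    rw [Hprim, Hprim, ← intervalIntegral.integral_interval_sub_left (hint 0 b) (hint 0 a)]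
  have hpos : 0 < ∫ s in a..b, Real.exp (-s^2) :=
    intervalIntegral.intervalIntegral_pos_of_pos (hint a b)
      (fun x => Real.exp_pos _) hab
  linarith [hsplit, hpos]

lemma Hprim_continuous : Continuous Hprim :=
  intervalIntegral.continuous_primitive
    (fun a b => Continuous.intervalIntegrable (by continuity) a b) 0

lemma Hprim_tendsto :
    Filter.Tendsto Hprim Filter.atTop (nhds (Real.sqrt Real.pi / 2)) := by
  have h := MeasureTheory.intervalIntegral_tendsto_integral_Ioi (μ := volume) 0
    (f := fun s : ℝ => Real.exp (-s^2)) ?_ (Filter.tendsto_id (α := ℝ))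
  · have hval : (∫ s in Ioi (0:ℝ), Real.exp (-s^2)) = Real.sqrt Real.pi / 2 := by
      have := integral_gaussian_Ioi 1
      simpa using this
    rw [← hval]
    exact h
  · have : IntegrableOn (fun s : ℝ => Real.exp (-1 * s^2)) (Ioi 0) volume :=
      (integrable_exp_neg_mul_sq (by norm_num : (0:ℝ) < 1)).integrableOn
    simpa using this

lemma exists_c : ∃ c : ℝ, 0 < c ∧ Hprim c = Real.sqrt Real.pi / 4 := by
  have hsπ : 0 < Real.sqrt Real.pi := Real.sqrt_pos.2 Real.pi_pos
  have hlt : Real.sqrt Real.pi / 4 < Real.sqrt Real.pi / 2 := by linarith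
  obtain ⟨M, hM⟩ := (Hprim_tendsto.eventually (eventually_ge_nhds hlt)).exists
  have h0 : Hprim 0 = 0 := by simp [Hprim]
  have hiv : Real.sqrt Real.pi / 4 ∈ Icc (Hprim 0) (Hprim M) := by
    constructor
    · rw [h0]; positivity
    · linarith
  have hM0 : (0:ℝ) ≤ M := by
    by_contra h
    push_neg at h
    have := Hprim_strictMono h
    rw [h0] at this
    nlinarith
  obtain ⟨c, hc, hceq⟩ := intermediate_value_Icc hM0 Hprim_continuous.continuousOn hiv
  refine ⟨c, ?_, hceq⟩
  rcases lt_or_eq_of_le hc.1 with h | h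
  · exact h
  · exfalso; rw [← h, h0] at hceq; nlinarith

/-- Rigorous content of the paper's Theorem 1: the one-sided Gaussian CDF at
the threshold `γ_th = 8`, viewed as a function of the average SNR `γ̄`, is
strictly decreasing on `(0,∞)` and takes the value `1/2` at a unique `γ̄ > 0`. -/
theorem boundary_snr_high_snr_regime :
    (∃! γbar : ℝ, 0 < γbar ∧
        (∫ γ in (0:ℝ)..8,
          Real.exp (-γ / (2 * γbar)) / Real.sqrt (2 * Real.pi * γbar * γ)) = 1 / 2) ∧
      StrictAntiOn
        (fun γbar : ℝ => ∫ γ in (0:ℝ)..8,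
          Real.exp (-γ / (2 * γbar)) / Real.sqrt (2 * Real.pi * γbar * γ))
        (Set.Ioi 0) := by
  have hsπ : 0 < Real.sqrt Real.pi := Real.sqrt_pos.2 Real.pi_pos
  have hanti : StrictAntiOn
      (fun γbar : ℝ => ∫ γ in (0:ℝ)..8,
        Real.exp (-γ / (2 * γbar)) / Real.sqrt (2 * Real.pi * γbar * γ))
      (Set.Ioi 0) := by
    intro a ha b hb hab
    simp only [Set.mem_Ioi] at ha hb
    dsimp only
    rw [key a ha, key b hb]
    have hlt : 2 / Real.sqrt b < 2 / Real.sqrt a := by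
      apply div_lt_div_of_pos_left (by norm_num) (Real.sqrt_pos.2 ha)
      exact Real.sqrt_lt_sqrt ha.le hab
    exact mul_lt_mul_of_pos_left (Hprim_strictMono hlt) (by positivity)
  refine ⟨?_, hanti⟩
  obtain ⟨c, hc, hceq⟩ := exists_c
  refine ⟨4 / c ^ 2, ⟨by positivity, ?_⟩, ?_⟩
  · have hg : (0:ℝ) < 4 / c ^ 2 := by positivity
    have hsg : Real.sqrt (4 / c ^ 2) = 2 / c := by
      rw [Real.sqrt_div (by norm_num) _, Real.sqrt_sq hc.le,
        show Real.sqrt 4 = 2 by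
          rw [show (4:ℝ) = 2 ^ 2 by norm_num, Real.sqrt_sq (by norm_num)]]
    rw [key _ hg, hsg, show (2:ℝ) / (2 / c) = c by field_simp, hceq]
    field_simp
    ring
  · rintro y ⟨hy, hyeq⟩
    have hx : (0:ℝ) < 4 / c ^ 2 := by positivity
    apply hanti.injOn (Set.mem_Ioi.2 hy) (Set.mem_Ioi.2 hx)
    dsimp only
    rw [hyeq]
    have hsg : Real.sqrt (4 / c ^ 2) = 2 / c := by
      rw [Real.sqrt_div (by norm_num) _, Real.sqrt_sq hc.le,
        show Real.sqrt 4 = 2 by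
          rw [show (4:ℝ) = 2 ^ 2 by norm_num, Real.sqrt_sq (by norm_num)]]
    rw [key _ hx, hsg, show (2:ℝ) / (2 / c) = c by field_simp, hceq]
    field_simp
    ring
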